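/- Fix E < 0 and let q(ξ) = 4 Σ_{j=1}^d sinh²(ξ_j/2), K^E = {ξ ∈ ℝ^d : q(ξ) ≤ |E|}, and ρ_E(x) = sup_{ξ ∈ K^E} ⟨x, ξ⟩. Then ρ_E is differentiable at every x ∈ ℝ^d ∖ {0}, its gradient is ∂ρ_E(x) = G_E^{-1}(x/|x|) where G_E : ∂K^E → 𝕊^{d−1} is the Gauss map G_E(ξ) = ∂q(ξ)/|∂q(ξ)|, and ρ_E satisfies the eikonal equation q(∂ρ_E(x)) = |E| for every x ∈ ℝ^d ∖ {0}. -/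

import Mathlib

open MeasureTheory Real

noncomputable section

/-- `q(ξ) = 4 Σ_j sinh²(ξ_j/2)`. -/
def qfun {d : ℕ} (ξ : EuclideanSpace ℝ (Fin d)) : ℝ :=
  4 * ∑ j, Real.sinh (ξ j / 2) ^ 2

/-- `ρ_E(x) = sup_{ξ ∈ K^E} ⟨x, ξ⟩` with `K^E = {ξ : q(ξ) ≤ |E|}`. -/
def rhoE {d : ℕ} (E : ℝ) (x : EuclideanSpace ℝ (Fin d)) : ℝ :=
  sSup {r | ∃ ξ : EuclideanSpace ℝ (Fin d), qfun ξ ≤ |E| ∧ r = (inner ℝ x ξ : ℝ)}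

set_option maxHeartbeats 1000000

open Topology Filter RealInnerProductSpace

variable {d : ℕ}

lemma sq_le_sinh_sq (t : ℝ) : t ^ 2 ≤ Real.sinh t ^ 2 := by
  have h : |t| ≤ |Real.sinh t| := by
    rw [Real.abs_sinh]
    exact Real.self_le_sinh_iff.2 (abs_nonneg t)
  calc t ^ 2 = |t| ^ 2 := (sq_abs t).symm
    _ ≤ |Real.sinh t| ^ 2 := pow_le_pow_left₀ (abs_nonneg t) h 2
    _ = Real.sinh t ^ 2 := sq_abs _

lemma sum_sq_le_qfun (ξ : EuclideanSpace ℝ (Fin d)) : ∑ j, (ξ j) ^ 2 ≤ qfun ξ := by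
  rw [qfun, Finset.mul_sum]
  refine Finset.sum_le_sum fun j _ => ?_
  have := sq_le_sinh_sq (ξ j / 2)
  nlinarith [this]

lemma qfun_nonneg (ξ : EuclideanSpace ℝ (Fin d)) : 0 ≤ qfun ξ := by
  have : (0:ℝ) ≤ ∑ j, Real.sinh (ξ j / 2) ^ 2 :=
    Finset.sum_nonneg fun j _ => sq_nonneg _
  rw [qfun]; linarith

lemma norm_le_sqrt_of_qfun_le {c : ℝ} {ξ : EuclideanSpace ℝ (Fin d)} (h : qfun ξ ≤ c) :
    ‖ξ‖ ≤ Real.sqrt c := by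
  rw [EuclideanSpace.norm_eq]
  apply Real.sqrt_le_sqrt
  calc ∑ j, ‖ξ j‖ ^ 2 = ∑ j, (ξ j) ^ 2 := by simp [sq_abs]
    _ ≤ qfun ξ := sum_sq_le_qfun ξ
    _ ≤ c := h

lemma coord_abs_le {c : ℝ} {ξ : EuclideanSpace ℝ (Fin d)} (h : qfun ξ ≤ c) (j : Fin d) :
    |ξ j| ≤ Real.sqrt c := by
  have h1 : (ξ j) ^ 2 ≤ c := by
    have := Finset.single_le_sum (f := fun j => (ξ j)^2) (fun i _ => sq_nonneg _)
      (Finset.mem_univ j)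
    simp only at this
    linarith [sum_sq_le_qfun ξ]
  calc |ξ j| = Real.sqrt ((ξ j)^2) := (Real.sqrt_sq_eq_abs _).symm
    _ ≤ Real.sqrt c := Real.sqrt_le_sqrt h1

lemma cosh_ident (t : ℝ) : 4 * Real.sinh (t / 2) ^ 2 = 2 * Real.cosh t - 2 := by
  have h1 : Real.cosh (2 * (t / 2)) = Real.cosh (t/2)^2 + Real.sinh (t/2)^2 := Real.cosh_two_mul _
  have h2 : Real.cosh (t / 2) ^ 2 = Real.sinh (t / 2) ^ 2 + 1 := Real.cosh_sq _
  have h3 : 2 * (t / 2) = t := by ring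
  rw [h3] at h1
  nlinarith

lemma norm_sq_eq (x : EuclideanSpace ℝ (Fin d)) : ‖x‖ ^ 2 = ∑ j, (x j) ^ 2 := by
  rw [EuclideanSpace.norm_eq, Real.sq_sqrt (by positivity)]
  simp [sq_abs]

lemma midpoint_coord (a b : ℝ) :
    4 * Real.sinh ((a + b) / 2 / 2) ^ 2 + (a - b) ^ 2 / 4
      ≤ (4 * Real.sinh (a / 2) ^ 2 + 4 * Real.sinh (b / 2) ^ 2) / 2 := by
  set m := (a + b) / 2 with hm
  set h := (a - b) / 2 with hh
  have ea : Real.cosh a = Real.cosh m * Real.cosh h + Real.sinh m * Real.sinh h := by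
    have : a = m + h := by rw [hm, hh]; ring
    rw [this, Real.cosh_add]
  have eb : Real.cosh b = Real.cosh m * Real.cosh h - Real.sinh m * Real.sinh h := by
    have : b = m - h := by rw [hm, hh]; ring
    rw [this, Real.cosh_sub]
  have hsq : (h / 2) ^ 2 ≤ Real.sinh (h / 2) ^ 2 := sq_le_sinh_sq _
  have hch : 4 * Real.sinh (h / 2) ^ 2 = 2 * Real.cosh h - 2 := cosh_ident h
  have hca : 4 * Real.sinh (a / 2) ^ 2 = 2 * Real.cosh a - 2 := cosh_ident a
  have hcb : 4 * Real.sinh (b / 2) ^ 2 = 2 * Real.cosh b - 2 := cosh_ident b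
  have hcm : 4 * Real.sinh (m / 2) ^ 2 = 2 * Real.cosh m - 2 := cosh_ident m
  have h1m : 1 ≤ Real.cosh m := Real.one_le_cosh m
  have h1h : 1 ≤ Real.cosh h := Real.one_le_cosh h
  have habh : (a - b) ^ 2 = 4 * h ^ 2 := by rw [hh]; ring
  nlinarith [sq_nonneg (Real.sinh (m/2))]

lemma qfun_midpoint (a b : EuclideanSpace ℝ (Fin d)) :
    qfun ((2:ℝ)⁻¹ • (a + b)) + ‖a - b‖ ^ 2 / 4 ≤ (qfun a + qfun b) / 2 := by
  have hco : ∀ j, ((2:ℝ)⁻¹ • (a + b) : EuclideanSpace ℝ (Fin d)) j = (a j + b j) / 2 := by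
    intro j; simp [PiLp.smul_apply, PiLp.add_apply]; ring
  have hd : ∀ j, (a - b : EuclideanSpace ℝ (Fin d)) j = a j - b j := by
    intro j; simp [PiLp.sub_apply]
  rw [qfun, qfun, qfun, norm_sq_eq]
  simp only [hco, hd]
  rw [Finset.mul_sum, Finset.mul_sum, Finset.mul_sum]
  calc (∑ j, 4 * Real.sinh ((a j + b j) / 2 / 2) ^ 2) + (∑ j, (a j - b j) ^ 2) / 4
      = ∑ j, (4 * Real.sinh ((a j + b j) / 2 / 2) ^ 2 + (a j - b j) ^ 2 / 4) := by
        rw [Finset.sum_add_distrib, Finset.sum_div]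
    _ ≤ ∑ j, ((4 * Real.sinh (a j / 2) ^ 2 + 4 * Real.sinh (b j / 2) ^ 2) / 2) :=
        Finset.sum_le_sum fun j _ => midpoint_coord (a j) (b j)
    _ = ((∑ j, 4 * Real.sinh (a j / 2) ^ 2) + ∑ j, 4 * Real.sinh (b j / 2) ^ 2) / 2 := by
        rw [← Finset.sum_add_distrib, Finset.sum_div]

lemma cosh_lip {M u v : ℝ} (hu : |u| ≤ M) (hv : |v| ≤ M) :
    |Real.cosh u - Real.cosh v| ≤ Real.sinh M * |u - v| := by
  have h := Convex.norm_image_sub_le_of_norm_deriv_le (f := Real.cosh) (s := Set.Icc (-M) M)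
    (fun x _ => Real.differentiable_cosh.differentiableAt)
    (fun x hx => by
      rw [Real.deriv_cosh, Real.norm_eq_abs, Real.abs_sinh]
      exact Real.sinh_le_sinh.2 (abs_le.2 ⟨hx.1, hx.2⟩))
    (convex_Icc _ _) (Set.mem_Icc.2 (abs_le.1 hv)) (Set.mem_Icc.2 (abs_le.1 hu))
  simpa [Real.norm_eq_abs] using h

lemma qfun_move {R : ℝ} (m η : EuclideanSpace ℝ (Fin d)) (hm : ∀ j, |m j| ≤ R)
    (hη : ∀ j, |η j| ≤ 1) :
    qfun (m + η) ≤ qfun m + 2 * Real.sinh (R + 1) * ∑ j, |η j| := by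
  rw [qfun, qfun, Finset.mul_sum, Finset.mul_sum, Finset.mul_sum, ← Finset.sum_add_distrib]
  refine Finset.sum_le_sum fun j _ => ?_
  have hadd : (m + η : EuclideanSpace ℝ (Fin d)) j = m j + η j := rfl
  rw [hadd]
  have h1 : |m j + η j| ≤ R + 1 := le_trans (abs_add_le _ _) (add_le_add (hm j) (hη j))
  have h2 : |m j| ≤ R + 1 := le_trans (hm j) (by linarith [abs_nonneg (η j), hη j])
  have hl := cosh_lip h1 h2
  have e1 := cosh_ident (m j + η j)
  have e2 := cosh_ident (m j)
  have : |m j + η j - m j| = |η j| := by ring_nf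
  rw [this] at hl
  have := le_of_abs_le hl
  linarith

lemma inner_euclid (x y : EuclideanSpace ℝ (Fin d)) : ⟪x, y⟫ = ∑ j, x j * y j := by
  simp [PiLp.inner_apply, RCLike.inner_apply, conj_trivial]
  exact Finset.sum_congr rfl fun j _ => mul_comm _ _

lemma qfun_continuous : Continuous (qfun (d := d)) := by
  apply Continuous.mul continuous_const
  exact continuous_finset_sum _ fun j _ =>
    ((Real.continuous_sinh.comp (((EuclideanSpace.proj (𝕜 := ℝ) j).continuous).div_const 2)).pow 2)

lemma qfun_zero : qfun (0 : EuclideanSpace ℝ (Fin d)) = 0 := by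
  simp [qfun]

lemma isCompact_K (c : ℝ) : IsCompact {ξ : EuclideanSpace ℝ (Fin d) | qfun ξ ≤ c} := by
  apply Metric.isCompact_of_isClosed_isBounded
  · exact isClosed_le (qfun_continuous) continuous_const
  · apply (Metric.isBounded_closedBall (x := (0 : EuclideanSpace ℝ (Fin d)))
      (r := Real.sqrt c)).subset
    intro ξ hξ
    simp only [Metric.mem_closedBall, dist_zero_right]
    exact norm_le_sqrt_of_qfun_le hξ

lemma exists_max (c : ℝ) (hc : 0 ≤ c) (x : EuclideanSpace ℝ (Fin d)) :
    ∃ ξm : EuclideanSpace ℝ (Fin d), qfun ξm ≤ c ∧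
      ∀ ξ : EuclideanSpace ℝ (Fin d), qfun ξ ≤ c → ⟪x, ξ⟫ ≤ ⟪x, ξm⟫ := by
  obtain ⟨ξm, hmem, hmax⟩ := (isCompact_K (d := d) c).exists_isMaxOn
    (f := fun ξ => ⟪x, ξ⟫) ⟨0, by simp [qfun_zero, hc]⟩
    (Continuous.continuousOn (continuous_const.inner continuous_id))
  exact ⟨ξm, hmem, fun ξ hξ => hmax hξ⟩

lemma rhoE_eq' {E : ℝ} {x ξm : EuclideanSpace ℝ (Fin d)} (h1 : qfun ξm ≤ |E|)
    (h2 : ∀ ξ : EuclideanSpace ℝ (Fin d), qfun ξ ≤ |E| → ⟪x, ξ⟫ ≤ ⟪x, ξm⟫) :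
    rhoE E x = ⟪x, ξm⟫ := by
  apply IsGreatest.csSup_eq
  constructor
  · exact ⟨ξm, h1, rfl⟩
  · rintro r ⟨ξ, hξ, rfl⟩
    exact h2 ξ hξ

def gradQ {d : ℕ} (ξ : EuclideanSpace ℝ (Fin d)) : EuclideanSpace ℝ (Fin d) :=
  WithLp.toLp 2 (fun j => 2 * Real.sinh (ξ j))

lemma hasGradientAt_qfun (ξ : EuclideanSpace ℝ (Fin d)) : HasGradientAt qfun (gradQ ξ) ξ := by
  rw [hasGradientAt_iff_hasFDerivAt]
  have hterm : ∀ j : Fin d, HasFDerivAt (fun ξ : EuclideanSpace ℝ (Fin d) => Real.sinh (ξ j / 2) ^ 2)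
      ((Real.sinh (ξ j) / 2) • (EuclideanSpace.proj (𝕜 := ℝ) j)) ξ := by
    intro j
    have hlin : HasFDerivAt (fun ξ : EuclideanSpace ℝ (Fin d) => ξ j)
        (EuclideanSpace.proj (𝕜 := ℝ) j) ξ := (EuclideanSpace.proj (𝕜 := ℝ) j).hasFDerivAt
    have hreal : HasDerivAt (fun t : ℝ => Real.sinh (t / 2) ^ 2) (Real.sinh (ξ j) / 2) (ξ j) := by
      have h1 : HasDerivAt (fun t : ℝ => t / 2) (1 / 2) (ξ j) := (hasDerivAt_id _).div_const 2
      have h2 : HasDerivAt Real.sinh (Real.cosh (ξ j / 2)) (ξ j / 2) := Real.hasDerivAt_sinh _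
      have h3 : HasDerivAt (fun t : ℝ => Real.sinh (t / 2)) (Real.cosh (ξ j / 2) * (1 / 2)) (ξ j) :=
        by have := HasDerivAt.comp (ξ j) h2 h1; exact this
      have h4 := h3.pow 2
      refine h4.congr_deriv ?_
      have h5 := Real.sinh_two_mul (ξ j / 2)
      have h6 : (2:ℝ) * (ξ j / 2) = ξ j := by ring
      rw [h6] at h5
      rw [h5]; ring
    exact hreal.comp_hasFDerivAt ξ hlin
  have hsum := HasFDerivAt.sum (u := Finset.univ) (fun j _ => hterm j)
  have hq := hsum.const_mul 4
  have heq : (4 : ℝ) • ∑ j, (Real.sinh (ξ j) / 2) • (EuclideanSpace.proj (𝕜 := ℝ) j) =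
      InnerProductSpace.toDual ℝ (EuclideanSpace ℝ (Fin d)) (gradQ ξ) := by
    apply ContinuousLinearMap.ext
    intro w
    simp only [ContinuousLinearMap.smul_apply, ContinuousLinearMap.coe_sum',
      Finset.sum_apply, PiLp.proj_apply, InnerProductSpace.toDual_apply_apply,
      smul_eq_mul]
    rw [inner_euclid, Finset.mul_sum]
    refine Finset.sum_congr rfl fun j _ => ?_
    show 4 * (Real.sinh (ξ j) / 2 * w j) = gradQ ξ j * w j
    rw [gradQ]; ring
  rw [← heq]
  have hfun : qfun = fun y => 4 * (∑ i, fun ξ : EuclideanSpace ℝ (Fin d) => Real.sinh (ξ i / 2) ^ 2) y := by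
    ext y
    simp [qfun, Finset.sum_apply]
  rw [hfun]
  exact hq

lemma qfun_curve_deriv (ξm u : EuclideanSpace ℝ (Fin d)) :
    HasDerivAt (fun t : ℝ => qfun (ξm + t • u)) ⟪gradQ ξm, u⟫ 0 := by
  have hγ : HasDerivAt (fun t : ℝ => ξm + t • u) u 0 := by
    simpa using ((hasDerivAt_id (0 : ℝ)).smul_const u).const_add ξm
  have h0 : ξm + (0 : ℝ) • u = ξm := by simp
  have hf : HasFDerivAt qfun
      (InnerProductSpace.toDual ℝ (EuclideanSpace ℝ (Fin d)) (gradQ ξm)) (ξm + (0 : ℝ) • u) := by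
    rw [h0]; exact (hasGradientAt_qfun ξm).hasFDerivAt
  have := hf.comp_hasDerivAt 0 hγ
  simp only [InnerProductSpace.toDual_apply_apply] at this
  exact this

lemma lagrange {c : ℝ} (x ξm u : EuclideanSpace ℝ (Fin d))
    (hfeas : qfun ξm ≤ c)
    (hmax : ∀ ξ : EuclideanSpace ℝ (Fin d), qfun ξ ≤ c → ⟪x, ξ⟫ ≤ ⟪x, ξm⟫)
    (hu : ⟪gradQ ξm, u⟫ < 0) : ⟪x, u⟫ ≤ 0 := by
  have hφ := qfun_curve_deriv ξm u
  have hs := hasDerivAt_iff_tendsto_slope.mp hφ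
  have hev : ∀ᶠ t in 𝓝[≠] (0:ℝ), slope (fun t : ℝ => qfun (ξm + t • u)) 0 t < 0 :=
    hs (Iio_mem_nhds hu)
  have hev' : ∀ᶠ t in 𝓝[>] (0:ℝ), slope (fun t : ℝ => qfun (ξm + t • u)) 0 t < 0 :=
    hev.filter_mono (nhdsWithin_mono 0 (fun t ht => ne_of_gt ht))
  have hmem : ∀ᶠ t in 𝓝[>] (0:ℝ), t ∈ Set.Ioi (0:ℝ) := eventually_mem_nhdsWithin
  obtain ⟨t, hslope, ht⟩ := (hev'.and hmem).exists
  have ht0 : (0:ℝ) < t := ht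
  rw [slope_def_field] at hslope
  have hq : qfun (ξm + t • u) < qfun ξm := by
    have : (qfun (ξm + t • u) - qfun (ξm + (0:ℝ) • u)) / (t - 0) < 0 := by
      simpa [div_eq_iff] using hslope
    have h2 := (div_neg_iff.mp this)
    rcases h2 with ⟨h3, h4⟩ | ⟨h3, h4⟩
    · linarith
    · simp only [zero_smul, add_zero] at h3
      linarith
  have hfeas2 : qfun (ξm + t • u) ≤ c := le_trans (le_of_lt hq) hfeas
  have := hmax _ hfeas2
  rw [inner_add_right, real_inner_smul_right] at this
  nlinarith

lemma abs_coord_le_norm (v : EuclideanSpace ℝ (Fin d)) (j : Fin d) : |v j| ≤ ‖v‖ := by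
  have h1 : (v j) ^ 2 ≤ ‖v‖ ^ 2 := by
    rw [norm_sq_eq]
    exact Finset.single_le_sum (f := fun i => (v i) ^ 2) (fun i _ => sq_nonneg _)
      (Finset.mem_univ j)
  calc |v j| = Real.sqrt ((v j) ^ 2) := (Real.sqrt_sq_eq_abs _).symm
    _ ≤ Real.sqrt (‖v‖ ^ 2) := Real.sqrt_le_sqrt h1
    _ = ‖v‖ := by rw [Real.sqrt_sq (norm_nonneg _)]

lemma max_on_boundary {c : ℝ} (hc : 0 < c) {x ξm : EuclideanSpace ℝ (Fin d)} (hx : x ≠ 0)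
    (hfeas : qfun ξm ≤ c)
    (hmax : ∀ ξ : EuclideanSpace ℝ (Fin d), qfun ξ ≤ c → ⟪x, ξ⟫ ≤ ⟪x, ξm⟫) :
    qfun ξm = c := by
  by_contra hne
  have hlt : qfun ξm < c := lt_of_le_of_ne hfeas hne
  have hcont : ContinuousAt (qfun (d := d)) ξm := qfun_continuous.continuousAt
  rw [Metric.continuousAt_iff] at hcont
  obtain ⟨δ, hδ, hball⟩ := hcont (c - qfun ξm) (by linarith)
  have hxn : (0:ℝ) < ‖x‖ := norm_pos_iff.mpr hx
  set t : ℝ := δ / (2 * ‖x‖) with ht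
  have ht0 : 0 < t := by positivity
  have hdist : dist (ξm + t • x) ξm < δ := by
    rw [dist_eq_norm]
    simp only [add_sub_cancel_left]
    rw [norm_smul, Real.norm_eq_abs, abs_of_pos ht0, ht]
    rw [div_mul_eq_mul_div]
    rw [div_lt_iff₀ (by positivity)]
    nlinarith
  have := hball hdist
  rw [Real.dist_eq] at this
  have hfeas2 : qfun (ξm + t • x) ≤ c := by
    have := abs_lt.mp this
    linarith
  have hm := hmax _ hfeas2
  rw [inner_add_right, real_inner_smul_right, real_inner_self_eq_norm_sq] at hm
  nlinarith [sq_nonneg ‖x‖, mul_pos ht0 (mul_pos hxn hxn)]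

lemma key_est {c : ℝ} (hc : 0 < c) {x y ξx ξy : EuclideanSpace ℝ (Fin d)} (hx : x ≠ 0)
    (hfx : qfun ξx ≤ c) (hmx : ∀ ξ : EuclideanSpace ℝ (Fin d), qfun ξ ≤ c → ⟪x, ξ⟫ ≤ ⟪x, ξx⟫)
    (hfy : qfun ξy ≤ c) (hmy : ∀ ξ : EuclideanSpace ℝ (Fin d), qfun ξ ≤ c → ⟪y, ξ⟫ ≤ ⟪y, ξy⟫) :
    ‖ξy - ξx‖ ^ 2 ≤
      (4 * (2 * Real.sinh (Real.sqrt c + 1) * d + c) * Real.sqrt c / ‖x‖) * ‖y - x‖ := by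
  set R : ℝ := Real.sqrt c with hR
  have hR0 : 0 < R := Real.sqrt_pos.mpr hc
  set L : ℝ := 2 * Real.sinh (R + 1) * d + c with hL
  have hsinh : 0 < Real.sinh (R + 1) := Real.sinh_pos_iff.mpr (by positivity)
  have hL0 : 0 < L := by positivity
  have hcL : c ≤ L := by
    have : (0:ℝ) ≤ 2 * Real.sinh (R + 1) * d := by positivity
    linarith
  have hxn : (0:ℝ) < ‖x‖ := norm_pos_iff.mpr hx
  set S : ℝ := ⟪x, ξx⟫ - ⟪x, ξy⟫ with hS
  have hS0 : 0 ≤ S := by have := hmx ξy hfy; linarith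
  -- Step A : S ≤ 2 R ‖y - x‖
  have hnx : ‖ξx‖ ≤ R := norm_le_sqrt_of_qfun_le hfx
  have hny : ‖ξy‖ ≤ R := norm_le_sqrt_of_qfun_le hfy
  have hdiffnorm : ‖ξy - ξx‖ ≤ 2 * R := by
    calc ‖ξy - ξx‖ ≤ ‖ξy‖ + ‖ξx‖ := norm_sub_le _ _
      _ ≤ 2 * R := by linarith
  have hSA : S ≤ 2 * R * ‖y - x‖ := by
    have h1 : ⟪y, ξx⟫ ≤ ⟪y, ξy⟫ := hmy ξx hfx
    have h2 : S ≤ ⟪y - x, ξy - ξx⟫ := by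
      have : ⟪y - x, ξy - ξx⟫ = (⟪y, ξy⟫ - ⟪y, ξx⟫) + (⟪x, ξx⟫ - ⟪x, ξy⟫) := by
        rw [inner_sub_left, inner_sub_right, inner_sub_right]; ring
      rw [this, hS]; linarith
    calc S ≤ ⟪y - x, ξy - ξx⟫ := h2
      _ ≤ ‖y - x‖ * ‖ξy - ξx‖ := real_inner_le_norm _ _
      _ ≤ ‖y - x‖ * (2 * R) := by
          exact mul_le_mul_of_nonneg_left hdiffnorm (norm_nonneg _)
      _ = 2 * R * ‖y - x‖ := by ring
  -- Step B
  set δ : ℝ := ‖ξy - ξx‖ ^ 2 / 4 with hδ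
  have hδ0 : 0 ≤ δ := by positivity
  have hδc : δ ≤ c := by
    have : ‖ξy - ξx‖ ^ 2 ≤ (2 * R) ^ 2 := by
      exact pow_le_pow_left₀ (norm_nonneg _) hdiffnorm 2
    have hRc : R ^ 2 = c := Real.sq_sqrt hc.le
    rw [hδ]; nlinarith
  set t : ℝ := δ / L with htdef
  have ht0 : 0 ≤ t := by positivity
  have ht1 : t ≤ 1 := by rw [htdef, div_le_one hL0]; linarith
  set m : EuclideanSpace ℝ (Fin d) := (2:ℝ)⁻¹ • (ξx + ξy) with hm
  have hqm : qfun m + δ ≤ c := by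
    have := qfun_midpoint ξx ξy
    have hsub : ‖ξx - ξy‖ = ‖ξy - ξx‖ := norm_sub_rev _ _
    rw [hsub, ← hm] at this
    rw [hδ]; linarith
  have hmcoord : ∀ j, |m j| ≤ R := by
    intro j
    have : m j = (ξx j + ξy j) / 2 := by
      rw [hm]; simp [PiLp.smul_apply, PiLp.add_apply]; ring
    rw [this]
    have h1 := coord_abs_le hfx j
    have h2 := coord_abs_le hfy j
    have habs : |(ξx j + ξy j) / 2| ≤ (|ξx j| + |ξy j|) / 2 := by
      rw [abs_div, abs_two]
      have := abs_add_le (ξx j) (ξy j)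
      linarith
    linarith
  set η : EuclideanSpace ℝ (Fin d) := t • (‖x‖⁻¹ • x) with hη
  have hηcoord : ∀ j, |η j| ≤ t := by
    intro j
    have h1 : |η j| = t * |(‖x‖⁻¹ • x : EuclideanSpace ℝ (Fin d)) j| := by
      rw [hη]; simp [PiLp.smul_apply, abs_mul, abs_of_nonneg ht0]
    rw [h1]
    have h2 : |(‖x‖⁻¹ • x : EuclideanSpace ℝ (Fin d)) j| ≤ ‖(‖x‖⁻¹ • x : EuclideanSpace ℝ (Fin d))‖ :=
      abs_coord_le_norm _ _
    have h3 : ‖(‖x‖⁻¹ • x : EuclideanSpace ℝ (Fin d))‖ = 1 := by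
      rw [norm_smul, Real.norm_eq_abs, abs_of_pos (by positivity)]
      field_simp
    nlinarith [abs_nonneg ((‖x‖⁻¹ • x : EuclideanSpace ℝ (Fin d)) j)]
  have hfeasm : qfun (m + η) ≤ c := by
    have hmove := qfun_move m η hmcoord (fun j => le_trans (hηcoord j) ht1)
    have hsum : ∑ j, |η j| ≤ d * t :=
      le_trans (Finset.sum_le_sum fun j _ => hηcoord j) (by simp [Finset.sum_const, Finset.card_univ, nsmul_eq_mul])
    have : 2 * Real.sinh (R + 1) * ∑ j, |η j| ≤ 2 * Real.sinh (R + 1) * (d * t) :=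
      mul_le_mul_of_nonneg_left hsum (by positivity)
    have hLt : 2 * Real.sinh (R + 1) * (d * t) ≤ L * t := by
      rw [hL]; nlinarith
    have hLtδ : L * t = δ := by rw [htdef]; field_simp
    linarith
  -- conclude
  have hinner : ⟪x, m + η⟫ ≤ ⟪x, ξx⟫ := hmx _ hfeasm
  have hxm : ⟪x, m⟫ = ⟪x, ξx⟫ - S / 2 := by
    rw [hm, real_inner_smul_right, inner_add_right, hS]; ring
  have hxη : ⟪x, η⟫ = t * ‖x‖ := by
    rw [hη, real_inner_smul_right, real_inner_smul_right, real_inner_self_eq_norm_sq]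
    field_simp
  rw [inner_add_right, hxm, hxη] at hinner
  have hkey : δ * ‖x‖ / L ≤ S / 2 := by
    have : t * ‖x‖ ≤ S / 2 := by linarith
    rw [htdef] at this
    calc δ * ‖x‖ / L = δ / L * ‖x‖ := by ring
      _ ≤ S / 2 := this
  have h4δ : ‖ξy - ξx‖ ^ 2 = 4 * δ := by rw [hδ]; ring
  rw [h4δ, div_mul_eq_mul_div, le_div_iff₀ hxn]
  rw [div_le_iff₀ hL0] at hkey
  nlinarith [mul_le_mul_of_nonneg_right hSA hL0.le, norm_nonneg (y - x)]

/-- for `E < 0`, `ρ_E` is differentiable away from `0`, its gradient is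
`G_E^{-1}(x/|x|)` (i.e. it lies on `∂K^E = {q = |E|}` and the Gauss map
`ξ ↦ ∂q(ξ)/|∂q(ξ)|` sends it to `x/|x|`), and `ρ_E` satisfies the eikonal equation
`q(∂ρ_E(x)) = |E|` on `ℝ^d ∖ {0}`. -/
theorem rhoE_eikonal (d : ℕ) (hd : 0 < d) (E : ℝ) (hE : E < 0) :
    ∀ x : EuclideanSpace ℝ (Fin d), x ≠ 0 →
      DifferentiableAt ℝ (rhoE E) x ∧
      qfun (gradient (rhoE E) x) = |E| ∧
      gradient qfun (gradient (rhoE E) x) ≠ 0 ∧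
      ‖gradient qfun (gradient (rhoE E) x)‖⁻¹ • gradient qfun (gradient (rhoE E) x) =
        ‖x‖⁻¹ • x := by
  intro x hx
  have hc : (0:ℝ) < |E| := abs_pos.mpr (ne_of_lt hE)
  have hxn : (0:ℝ) < ‖x‖ := norm_pos_iff.mpr hx
  obtain ⟨ξx, hfx, hmx⟩ := exists_max |E| hc.le x
  -- differentiability
  have hgrad : HasGradientAt (rhoE E) ξx x := by
    rw [hasGradientAt_iff_hasFDerivAt, hasFDerivAt_iff_isLittleO_nhds_zero]
    rw [Asymptotics.isLittleO_iff]
    intro ε hε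
    set C : ℝ := 4 * (2 * Real.sinh (Real.sqrt |E| + 1) * d + |E|) * Real.sqrt |E| / ‖x‖
      with hCdef
    have hC0 : 0 ≤ C := by
      rw [hCdef]
      have : (0:ℝ) < Real.sinh (Real.sqrt |E| + 1) :=
        Real.sinh_pos_iff.mpr (by positivity)
      positivity
    have hδ0 : (0:ℝ) < ε ^ 2 / (C + 1) := by positivity
    filter_upwards [Metric.ball_mem_nhds (0 : EuclideanSpace ℝ (Fin d)) hδ0] with h hh
    obtain ⟨ξy, hfy, hmy⟩ := exists_max |E| hc.le (x + h)
    have hρy : rhoE E (x + h) = ⟪x + h, ξy⟫ := rhoE_eq' hfy hmy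
    have hρx : rhoE E x = ⟪x, ξx⟫ := rhoE_eq' hfx hmx
    have htd : (InnerProductSpace.toDual ℝ (EuclideanSpace ℝ (Fin d)) ξx) h = ⟪ξx, h⟫ :=
      InnerProductSpace.toDual_apply_apply
    have hlow : 0 ≤ rhoE E (x + h) - rhoE E x - ⟪ξx, h⟫ := by
      have h1 : ⟪x + h, ξx⟫ ≤ ⟪x + h, ξy⟫ := hmy ξx hfx
      have h2 : ⟪x + h, ξx⟫ = ⟪x, ξx⟫ + ⟪ξx, h⟫ := by
        rw [inner_add_left, real_inner_comm h ξx]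
      rw [hρy, hρx]; linarith
    have hup : rhoE E (x + h) - rhoE E x - ⟪ξx, h⟫ ≤ ‖h‖ * ‖ξy - ξx‖ := by
      have h1 : ⟪x, ξy⟫ ≤ ⟪x, ξx⟫ := hmx ξy hfy
      have h2 : ⟪x + h, ξy⟫ - ⟪x, ξy⟫ - ⟪ξx, h⟫ = ⟪h, ξy - ξx⟫ := by
        rw [inner_add_left, inner_sub_right, real_inner_comm h ξx]; ring
      have h3 : ⟪h, ξy - ξx⟫ ≤ ‖h‖ * ‖ξy - ξx‖ := real_inner_le_norm _ _
      rw [hρy, hρx]; linarith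
    have hest := key_est hc hx hfx hmx hfy hmy
    have hnorm : ‖x + h - x‖ = ‖h‖ := by simp
    rw [hnorm] at hest
    have hhlt : ‖h‖ < ε ^ 2 / (C + 1) := by
      simpa [dist_eq_norm] using hh
    have hξ : ‖ξy - ξx‖ ≤ ε := by
      have h1 : ‖ξy - ξx‖ ^ 2 ≤ ε ^ 2 := by
        have : C * ‖h‖ ≤ ε ^ 2 := by
          have h2 : C * ‖h‖ ≤ C * (ε ^ 2 / (C + 1)) :=
            mul_le_mul_of_nonneg_left hhlt.le hC0
          have h3 : C * (ε ^ 2 / (C + 1)) ≤ ε ^ 2 := by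
            rw [mul_div_assoc']
            rw [div_le_iff₀ (by positivity)]
            nlinarith [sq_nonneg ε]
          linarith
        calc ‖ξy - ξx‖ ^ 2 ≤ C * ‖h‖ := hest
          _ ≤ ε ^ 2 := this
      calc ‖ξy - ξx‖ = Real.sqrt (‖ξy - ξx‖ ^ 2) := (Real.sqrt_sq (norm_nonneg _)).symm
        _ ≤ Real.sqrt (ε ^ 2) := Real.sqrt_le_sqrt h1
        _ = ε := Real.sqrt_sq hε.le
    rw [htd]
    rw [Real.norm_eq_abs, abs_of_nonneg hlow]
    calc rhoE E (x + h) - rhoE E x - ⟪ξx, h⟫ ≤ ‖h‖ * ‖ξy - ξx‖ := hup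
      _ ≤ ‖h‖ * ε := mul_le_mul_of_nonneg_left hξ (norm_nonneg _)
      _ = ε * ‖h‖ := mul_comm _ _
  have hdiff : DifferentiableAt ℝ (rhoE E) x := by
    rw [hasGradientAt_iff_hasFDerivAt] at hgrad
    exact hgrad.differentiableAt
  have hgx : gradient (rhoE E) x = ξx := hgrad.gradient
  have hqb : qfun ξx = |E| := max_on_boundary hc hx hfx hmx
  have hvg : gradient qfun ξx = gradQ ξx := (hasGradientAt_qfun ξx).gradient
  have hξx0 : ξx ≠ 0 := by
    intro h0
    rw [h0, qfun_zero] at hqb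
    linarith
  set v : EuclideanSpace ℝ (Fin d) := gradQ ξx with hvdef
  have hv0 : v ≠ 0 := by
    intro h0
    apply hξx0
    ext j
    have : v j = 0 := by rw [h0]; rfl
    rw [hvdef] at this
    have h2 : 2 * Real.sinh (ξx j) = 0 := this
    have h3 : Real.sinh (ξx j) = 0 := by linarith
    have := Real.sinh_eq_zero.mp h3
    simpa using this
  have hvn : (0:ℝ) < ‖v‖ := norm_pos_iff.mpr hv0
  -- Lagrange: x is positive multiple of v
  have hxv : 0 ≤ ⟪x, v⟫ := by
    have h1 : ⟪v, -v⟫ < 0 := by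
      rw [inner_neg_right, real_inner_self_eq_norm_sq]
      nlinarith
    have := lagrange x ξx (-v) hfx hmx h1
    rw [inner_neg_right] at this
    linarith
  set α : ℝ := ⟪x, v⟫ / ‖v‖ ^ 2 with hαdef
  have hα0 : 0 ≤ α := by positivity
  set w : EuclideanSpace ℝ (Fin d) := x - α • v with hwdef
  have hvw : ⟪v, w⟫ = 0 := by
    rw [hwdef, inner_sub_right, real_inner_smul_right, real_inner_self_eq_norm_sq,
      real_inner_comm x v, hαdef]
    field_simp
    ring
  have hw0 : w = 0 := by
    by_contra hw
    have hwn : (0:ℝ) < ‖w‖ := norm_pos_iff.mpr hw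
    set ε : ℝ := ‖w‖ ^ 2 / (⟪x, v⟫ + 1) with hεdef
    have hε0 : (0:ℝ) < ε := by positivity
    set u : EuclideanSpace ℝ (Fin d) := w - ε • v with hudef
    have hvu : ⟪v, u⟫ < 0 := by
      rw [hudef, inner_sub_right, real_inner_smul_right, real_inner_self_eq_norm_sq, hvw]
      have : 0 < ε * ‖v‖ ^ 2 := by positivity
      linarith
    have hlag := lagrange x ξx u hfx hmx hvu
    have hxw : ⟪x, w⟫ = ‖w‖ ^ 2 := by
      have hxdec : x = w + α • v := by rw [hwdef]; abel
      calc ⟪x, w⟫ = ⟪w + α • v, w⟫ := by rw [← hxdec]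
        _ = ⟪w, w⟫ + α * ⟪v, w⟫ := by
              rw [inner_add_left, real_inner_smul_left]
        _ = ‖w‖ ^ 2 := by rw [hvw, real_inner_self_eq_norm_sq]; ring
    have hxu : ⟪x, u⟫ = ‖w‖ ^ 2 - ε * ⟪x, v⟫ := by
      rw [hudef, inner_sub_right, real_inner_smul_right, hxw]
    rw [hxu, hεdef] at hlag
    have hgen : ∀ s : ℝ, 0 ≤ s → ‖w‖ ^ 2 - ‖w‖ ^ 2 / (s + 1) * s = ‖w‖ ^ 2 / (s + 1) := by
      intro s hs
      have hs1 : s + 1 ≠ 0 := by positivity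
      field_simp
      ring
    have : ‖w‖ ^ 2 - ‖w‖ ^ 2 / (⟪x, v⟫ + 1) * ⟪x, v⟫ = ‖w‖ ^ 2 / (⟪x, v⟫ + 1) :=
      hgen _ hxv
    rw [this] at hlag
    have : (0:ℝ) < ‖w‖ ^ 2 / (⟪x, v⟫ + 1) := by positivity
    linarith
  have hxeq : x = α • v := by
    have := sub_eq_zero.mp (hwdef ▸ hw0)
    exact this
  have hαpos : 0 < α := by
    rcases lt_or_eq_of_le hα0 with h | h
    · exact h
    · exfalso; apply hx
      have hα0' : α = 0 := h.symm
      rw [hxeq, hα0', zero_smul]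
  rw [hgx, hvg]
  refine ⟨hdiff, hqb, hv0, ?_⟩
  rw [hxeq, norm_smul, Real.norm_eq_abs, abs_of_pos hαpos, smul_smul, mul_inv]
  congr 1
  field_simp

end
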